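/- Suppose that for each prime p, g_p : ℤ → ℕ is a bijection with g_p(0) = 0. Then the map from ℚ⁺ to ℤ⁺ sending the positive rational ∏_{p ∈ 𝒫} p^{α_p} (where α_p is the exponent of p in the unique prime factorization of the rational, zero for all but finitely many p) to the positive integer ∏_{p ∈ 𝒫} p^{g_p(α_p)} is a bijection. -/

import Mathlib

namespace Stmt10Aux

abbrev P := {p : ℕ // p.Prime}

noncomputable def E (α : P →₀ ℤ) : ℚ := α.prod fun p k => (p.1 : ℚ) ^ k

def N (f : P →₀ ℕ) : ℕ := f.prod fun p e => p.1 ^ e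

lemma p_cast_pos (p : P) : (0 : ℚ) < (p.1 : ℚ) := by exact_mod_cast p.2.pos

lemma p_cast_ne (p : P) : (p.1 : ℚ) ≠ 0 := ne_of_gt (p_cast_pos p)

lemma E_pos (α : P →₀ ℤ) : 0 < E α :=
  Finset.prod_pos fun p _ => zpow_pos (p_cast_pos p) _

lemma E_ne (α : P →₀ ℤ) : E α ≠ 0 := ne_of_gt (E_pos α)

lemma N_pos (f : P →₀ ℕ) : 0 < N f :=
  Finset.prod_pos fun p _ => pow_pos p.2.pos _

lemma E_add (α β : P →₀ ℤ) : E (α + β) = E α * E β :=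
  Finsupp.prod_add_index' (fun p => zpow_zero _) (fun p k l => zpow_add₀ (p_cast_ne p) k l)

lemma E_zero : E 0 = 1 := by simp [E]

lemma E_neg (α : P →₀ ℤ) : E (-α) = (E α)⁻¹ := by
  have h : E α * E (-α) = 1 := by rw [← E_add]; simp [E_zero]
  exact (inv_eq_of_mul_eq_one_right h).symm

lemma E_sub (α β : P →₀ ℤ) : E (α - β) = E α / E β := by
  rw [sub_eq_add_neg, E_add, E_neg, div_eq_mul_inv]

lemma N_add (f h : P →₀ ℕ) : N (f + h) = N f * N h :=
  Finsupp.prod_add_index' (fun p => pow_zero _) (fun p k l => pow_add _ k l)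

lemma nval (p q : P) (n : ℕ) :
    padicValNat p.1 (q.1 ^ n) = if q = p then n else 0 := by
  split_ifs with h
  · subst h
    haveI := Fact.mk q.2
    exact padicValNat.prime_pow n
  · apply padicValNat.eq_zero_of_not_dvd
    intro hdvd
    exact h (Subtype.ext ((Nat.prime_dvd_prime_iff_eq p.2 q.2).mp
      (p.2.dvd_of_dvd_pow hdvd))).symm

lemma zval (p q : P) (k : ℤ) :
    padicValRat p.1 ((q.1 : ℚ) ^ k) = if q = p then k else 0 := by
  haveI := Fact.mk p.2
  have key : ∀ n : ℕ, padicValRat p.1 ((q.1 : ℚ) ^ (n : ℤ)) = if q = p then (n : ℤ) else 0 := by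
    intro n
    rw [zpow_natCast, show ((q.1 : ℚ) ^ n) = ((q.1 ^ n : ℕ) : ℚ) by push_cast; ring,
      padicValRat.of_nat, nval]
    split_ifs <;> simp
  obtain ⟨n, rfl | rfl⟩ := k.eq_nat_or_neg
  · exact key n
  · rw [zpow_neg, padicValRat.inv, key n]
    split_ifs <;> simp

lemma val_E (p : P) (α : P →₀ ℤ) : padicValRat p.1 (E α) = α p := by
  haveI := Fact.mk p.2
  induction α using Finsupp.induction with
  | zero => simp [E_zero]
  | single_add a b f _ _ ih =>
    rw [E_add, padicValRat.mul (E_ne _) (E_ne _), ih, Finsupp.add_apply]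
    congr 1
    have : E (Finsupp.single a b) = (a.1 : ℚ) ^ b := by
      simp [E, Finsupp.prod_single_index]
    rw [this, zval, Finsupp.single_apply]

lemma val_N (p : P) (f : P →₀ ℕ) : padicValNat p.1 (N f) = f p := by
  haveI := Fact.mk p.2
  induction f using Finsupp.induction with
  | zero => simp [N]
  | single_add a b f _ _ ih =>
    rw [N_add, padicValNat.mul (N_pos _).ne' (N_pos _).ne', ih, Finsupp.add_apply]
    congr 1
    have : N (Finsupp.single a b) = a.1 ^ b := by
      simp [N, Finsupp.prod_single_index]
    rw [this, nval, Finsupp.single_apply]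

lemma E_inj : Function.Injective E := by
  intro α β h
  ext p
  rw [← val_E p α, ← val_E p β, h]

lemma N_inj : Function.Injective N := by
  intro f h' hfh
  ext p
  rw [← val_N p f, ← val_N p h', hfh]

/-- restrict a factorization to the prime subtype -/
noncomputable def res (n : ℕ) : P →₀ ℕ := n.factorization.subtypeDomain Nat.Prime

lemma N_res (n : ℕ) (hn : n ≠ 0) : N (res n) = n := by
  rw [N, res, Finsupp.prod_subtypeDomain_index
    (fun x hx => Nat.prime_of_mem_primeFactors (by simpa using hx))]
  exact Nat.factorization_prod_pow_eq_self hn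

noncomputable def castZ (f : P →₀ ℕ) : P →₀ ℤ := f.mapRange (fun n : ℕ => (n : ℤ)) rfl

lemma E_castZ (f : P →₀ ℕ) : E (castZ f) = (N f : ℚ) := by
  rw [E, castZ, Finsupp.prod_mapRange_index (by simp), N]
  rw [Finsupp.prod, Finsupp.prod, Nat.cast_prod]
  exact Finset.prod_congr rfl fun p _ => by rw [zpow_natCast]; push_cast; ring

lemma N_surj : Function.Surjective fun f => (⟨N f, N_pos f⟩ : ℕ+) := by
  intro n
  exact ⟨res n, Subtype.ext (N_res n n.2.ne')⟩

lemma E_surj : Function.Surjective fun α => (⟨E α, E_pos α⟩ : {q : ℚ // 0 < q}) := by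
  rintro ⟨q, hq⟩
  refine ⟨castZ (res q.num.toNat) - castZ (res q.den), Subtype.ext ?_⟩
  have hnum : q.num.toNat ≠ 0 := by
    have := Rat.num_pos.mpr hq; omega
  simp only [E_sub, E_castZ, N_res _ hnum, N_res _ q.den_nz]
  have h1 : ((q.num.toNat : ℚ)) = (q.num : ℚ) := by
    exact_mod_cast congrArg (fun z : ℤ => (z : ℚ)) (Int.toNat_of_nonneg (Rat.num_pos.mpr hq).le)
  rw [h1]
  exact Rat.num_div_den q

end Stmt10Aux

open Stmt10Aux in
/-- If for each prime `p`, `g_p : ℤ → ℕ` is a bijection with `g_p(0) = 0`, then the map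
`ℚ⁺ → ℤ⁺` sending `∏_p p^{α_p}` to `∏_p p^{g_p(α_p)}` is a bijection. -/
theorem stmt_10 (g : {p : ℕ // p.Prime} → ℤ → ℕ)
    (hg : ∀ p, Function.Bijective (g p)) (hg0 : ∀ p, g p 0 = 0) :
    ∃ Φ : {q : ℚ // 0 < q} → ℕ+,
      Function.Bijective Φ ∧
      ∀ α : {p : ℕ // p.Prime} →₀ ℤ, ∀ q : {q : ℚ // 0 < q},
        (q : ℚ) = (α.prod fun p k => (p.1 : ℚ) ^ k) →
        ((Φ q : ℕ+) : ℕ) = α.prod fun p k => p.1 ^ g p k := by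
  classical
  -- the equivalences given by `g p`
  let e : ∀ p : P, ℤ ≃ ℕ := fun p => Equiv.ofBijective (g p) (hg p)
  have he0 : ∀ p, (e p).symm 0 = 0 := by
    intro p
    have : e p 0 = 0 := hg0 p
    rw [← this, Equiv.symm_apply_apply]
  -- per-coordinate map on finsupps
  let G : (P →₀ ℤ) → (P →₀ ℕ) := fun α =>
    Finsupp.onFinset α.support (fun p => g p (α p)) (fun p h => by
      rw [Finsupp.mem_support_iff]
      intro h0
      exact h (show g p (α p) = 0 by rw [h0]; exact hg0 p))
  have hGapp : ∀ α p, G α p = g p (α p) := fun α p => rfl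
  have hGinj : Function.Injective G := by
    intro α β h
    ext p
    exact (hg p).1 (by rw [← hGapp α p, ← hGapp β p, h])
  have hGsurj : Function.Surjective G := by
    intro β
    refine ⟨Finsupp.onFinset β.support (fun p => (e p).symm (β p)) (fun p h => by
      rw [Finsupp.mem_support_iff]
      intro h0
      exact h (show (e p).symm (β p) = 0 by rw [h0]; exact he0 p)), ?_⟩
    ext p
    show g p ((e p).symm (β p)) = β p
    exact (e p).apply_symm_apply (β p)
  -- the bijections from the aux section
  let A : {q : ℚ // 0 < q} ≃ (P →₀ ℤ) :=
    (Equiv.ofBijective (fun α => (⟨E α, E_pos α⟩ : {q : ℚ // 0 < q}))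
      ⟨fun a b h => E_inj (congrArg Subtype.val h), E_surj⟩).symm
  refine ⟨fun q => ⟨N (G (A q)), N_pos _⟩, ?_, ?_⟩
  · constructor
    · intro a b h
      have := N_inj (congrArg (fun n : ℕ+ => (n : ℕ)) h)
      exact A.injective (hGinj this)
    · intro n
      obtain ⟨f, hf⟩ := N_surj n
      obtain ⟨α, hα⟩ := hGsurj f
      exact ⟨A.symm α, by simp only [Equiv.apply_symm_apply, hα, hf]⟩
  · intro α q hq
    have hAq : A q = α := by
      have : A.symm α = q := Subtype.ext (by exact hq.symm)
      rw [← this, Equiv.apply_symm_apply]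
    show N (G (A q)) = _
    rw [hAq]
    -- N (G α) = α.prod fun p k => p ^ g p k
    rw [N, Finsupp.prod_of_support_subset (G α)
      (Finsupp.support_onFinset_subset) (fun p e => p.1 ^ e) (fun p _ => pow_zero _)]
    rw [Finsupp.prod]
    rfl
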